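/- In the free graded Lie-coalgebra-candidate generated by depth-≤2 symbols, the cobracket of [x₁,x₂]_{r,s} (with r, s ≥ 1) equals [x₁,x₂]_{r−1,s} ∧ [x₁]_0 + [x₁,x₂]_{r,s−1} ∧ [x₂]_0 + [x₂]_s ∧ [x₁]_r + Σ_{i=1}^{r} (−1)^{r−i} C(r+s−1−i, s−1) [x₁x₂]_i ∧ [x₂]_{r+s−i} + Σ_{i=1}^{s} (−1)^r C(r+s−1−i, r−1) [x₁x₂]_i ∧ [x₁^{−1}]_{r+s−i}, where symbols with a zero index are interpreted as 0. Formally: extracting the coefficient of t₁^{r−1} t₂^{s−1} from δ[x₁,x₂|t₁,t₂] = [x₁,x₂|t₁,t₂]∧(t₁[x₁]₀+t₂[x₂]₀) + [x₂|t₂]∧[x₁|t₁] + [x₁x₂|t₁]∧[x₂|t₂−t₁] − [x₁x₂|t₂]∧[x₁^{−1}|t₂−t₁] yields the displayed formula. -/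
import Mathlib


/- STATEMENT 2: extracting the coefficient of `t₁^{r-1} t₂^{s-1}` from
`δ[x₁,x₂|t₁,t₂] = [x₁,x₂|t₁,t₂] ∧ (t₁[x₁]₀ + t₂[x₂]₀) + [x₂|t₂] ∧ [x₁|t₁]
  + [x₁x₂|t₁] ∧ [x₂|t₂-t₁] − [x₁x₂|t₂] ∧ [x₁⁻¹|t₂-t₁]`
yields the displayed formula for `δ[x₁,x₂]_{r,s}`.  Symbols are free generators,
wedges are products `ι a * ι b` in the exterior algebra over ℤ, and the
left-hand side below is the honest coefficient extraction (expanding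
`(t₂-t₁)^{m-1}` binomially and collecting the matching exponents). -/

noncomputable section

open Finset

variable (F : Type*) [Field F]

/-- free module on depth-1 symbols `[x]ₙ` (including `[x]₀`) and depth-2 symbols. -/
abbrev Sym2Mod : Type _ := FreeAbelianGroup ((F × ℕ) ⊕ (F × F × ℕ × ℕ))

variable {F}

/-- depth-1 symbol `[x]ₙ`. -/
def one (x : F) (n : ℕ) : Sym2Mod F := FreeAbelianGroup.of (Sum.inl (x, n))

/-- depth-2 symbol `[x₁,x₂]_{m,n}`, interpreted as `0` when an index is `0`. -/
def two (x y : F) (m n : ℕ) : Sym2Mod F :=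
  if m = 0 ∨ n = 0 then 0 else FreeAbelianGroup.of (Sum.inr (x, y, m, n))

/-- wedge `a ∧ b` inside the exterior algebra. -/
def wdg (a b : Sym2Mod F) : ExteriorAlgebra ℤ (Sym2Mod F) :=
  ExteriorAlgebra.ι ℤ a * ExteriorAlgebra.ι ℤ b


private lemma aux1 {M : Type*} [AddCommMonoid M] (r s : ℕ) (hs : 1 ≤ s)
    (f : ℕ → ℕ → ℕ → M) :
    ∑ i ∈ Icc 1 (r+s), ∑ m ∈ Icc 1 (r+s), ∑ k ∈ range m,
      (if i + k = r ∧ m = s + k then f i m k else 0)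
    = ∑ i ∈ Icc 1 r, f i (s + (r - i)) (r - i) := by
  have hsub : Icc 1 r ⊆ Icc 1 (r+s) := Icc_subset_Icc_right (Nat.le_add_right r s)
  have hz : ∀ i ∈ Icc 1 (r+s), i ∉ Icc 1 r →
      (∑ m ∈ Icc 1 (r+s), ∑ k ∈ range m,
        (if i + k = r ∧ m = s + k then f i m k else 0)) = 0 := by
    intro i hi hi'
    simp only [mem_Icc] at hi hi'
    refine Finset.sum_eq_zero fun m _ => Finset.sum_eq_zero fun k _ => ?_
    rw [if_neg (by omega)]
  rw [← Finset.sum_subset hsub hz]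
  refine Finset.sum_congr rfl fun i hi => ?_
  simp only [mem_Icc] at hi
  rw [Finset.sum_eq_single (s + (r - i))]
  · rw [Finset.sum_eq_single (r - i)]
    · rw [if_pos ⟨by omega, rfl⟩]
    · intro k _ hk; rw [if_neg (by omega)]
    · intro h; exact absurd (mem_range.mpr (by omega)) h
  · intro m _ hm
    refine Finset.sum_eq_zero fun k _ => ?_
    rw [if_neg (by omega)]
  · intro h; exact absurd (mem_Icc.mpr (by omega)) h

private lemma aux2 {M : Type*} [AddCommMonoid M] (r s : ℕ) (hr : 1 ≤ r)
    (f : ℕ → ℕ → ℕ → M) :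
    ∑ i ∈ Icc 1 (r+s), ∑ m ∈ Icc 1 (r+s), ∑ k ∈ range m,
      (if k = r - 1 ∧ i + (m - 1 - k) = s then f i m k else 0)
    = ∑ i ∈ Icc 1 s, f i (r + s - i) (r - 1) := by
  have hsub : Icc 1 s ⊆ Icc 1 (r+s) := Icc_subset_Icc_right (Nat.le_add_left s r)
  have hz : ∀ i ∈ Icc 1 (r+s), i ∉ Icc 1 s →
      (∑ m ∈ Icc 1 (r+s), ∑ k ∈ range m,
        (if k = r - 1 ∧ i + (m - 1 - k) = s then f i m k else 0)) = 0 := by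
    intro i hi hi'
    simp only [mem_Icc] at hi hi'
    refine Finset.sum_eq_zero fun m _ => Finset.sum_eq_zero fun k _ => ?_
    rw [if_neg (by omega)]
  rw [← Finset.sum_subset hsub hz]
  refine Finset.sum_congr rfl fun i hi => ?_
  simp only [mem_Icc] at hi
  rw [Finset.sum_eq_single (r + s - i)]
  · rw [Finset.sum_eq_single (r - 1)]
    · rw [if_pos ⟨rfl, by omega⟩]
    · intro k _ hk; rw [if_neg (by omega)]
    · intro h; exact absurd (mem_range.mpr (by omega)) h
  · intro m _ hm
    refine Finset.sum_eq_zero fun k hk => ?_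
    rw [mem_range] at hk
    rw [if_neg (by omega)]
  · intro h; exact absurd (mem_Icc.mpr (by omega)) h

theorem depth_two_cobracket_coefficient (x₁ x₂ : F) (r s : ℕ)
    (hr : 1 ≤ r) (hs : 1 ≤ s) :
    -- coefficient of t₁^{r-1} t₂^{s-1} in [x₁,x₂|t₁,t₂] ∧ (t₁[x₁]₀ + t₂[x₂]₀):
    (wdg (two x₁ x₂ (r - 1) s) (one x₁ 0) + wdg (two x₁ x₂ r (s - 1)) (one x₂ 0)
    -- coefficient in [x₂|t₂] ∧ [x₁|t₁]:
    + wdg (one x₂ s) (one x₁ r)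
    -- coefficient in [x₁x₂|t₁] ∧ [x₂|t₂−t₁]:
    + ∑ i ∈ Icc 1 (r + s), ∑ m ∈ Icc 1 (r + s), ∑ k ∈ range m,
        (if i + k = r ∧ m = s + k then
          ((-1 : ℤ) ^ k * (m - 1).choose k) • wdg (one (x₁ * x₂) i) (one x₂ m)
        else 0)
    -- coefficient in −[x₁x₂|t₂] ∧ [x₁⁻¹|t₂−t₁]:
    - ∑ i ∈ Icc 1 (r + s), ∑ m ∈ Icc 1 (r + s), ∑ k ∈ range m,
        (if k = r - 1 ∧ i + (m - 1 - k) = s then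
          ((-1 : ℤ) ^ k * (m - 1).choose k) • wdg (one (x₁ * x₂) i) (one x₁⁻¹ m)
        else 0))
    =
    -- the displayed formula:
    wdg (two x₁ x₂ (r - 1) s) (one x₁ 0) + wdg (two x₁ x₂ r (s - 1)) (one x₂ 0)
      + wdg (one x₂ s) (one x₁ r)
      + ∑ i ∈ Icc 1 r, ((-1 : ℤ) ^ (r - i) * (r + s - 1 - i).choose (s - 1)) •
          wdg (one (x₁ * x₂) i) (one x₂ (r + s - i))
      + ∑ i ∈ Icc 1 s, ((-1 : ℤ) ^ r * (r + s - 1 - i).choose (r - 1)) •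
          wdg (one (x₁ * x₂) i) (one x₁⁻¹ (r + s - i)) := by

  rw [aux1 r s hs (fun i m k =>
        ((-1 : ℤ) ^ k * (m - 1).choose k) • wdg (one (x₁ * x₂) i) (one x₂ m)),
      aux2 r s hr (fun i m k =>
        ((-1 : ℤ) ^ k * (m - 1).choose k) • wdg (one (x₁ * x₂) i) (one x₁⁻¹ m))]
  have e1 : ∑ i ∈ Icc 1 r,
      ((-1 : ℤ) ^ (r - i) * (s + (r - i) - 1).choose (r - i)) •
        wdg (one (x₁ * x₂) i) (one x₂ (s + (r - i)))
      = ∑ i ∈ Icc 1 r, ((-1 : ℤ) ^ (r - i) * (r + s - 1 - i).choose (s - 1)) •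
          wdg (one (x₁ * x₂) i) (one x₂ (r + s - i)) := by
    refine Finset.sum_congr rfl fun i hi => ?_
    simp only [mem_Icc] at hi
    have h1 : s + (r - i) = r + s - i := by omega
    have h2 : (s + (r - i) - 1).choose (r - i) = (r + s - 1 - i).choose (s - 1) := by
      rw [show s + (r - i) - 1 = r + s - 1 - i by omega,
          show s - 1 = r + s - 1 - i - (r - i) by omega,
          Nat.choose_symm (by omega)]
    rw [h2, h1]
  have e2 : ∑ i ∈ Icc 1 s,
      ((-1 : ℤ) ^ (r - 1) * (r + s - i - 1).choose (r - 1)) •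
        wdg (one (x₁ * x₂) i) (one x₁⁻¹ (r + s - i))
      = -∑ i ∈ Icc 1 s, ((-1 : ℤ) ^ r * (r + s - 1 - i).choose (r - 1)) •
          wdg (one (x₁ * x₂) i) (one x₁⁻¹ (r + s - i)) := by
    rw [← Finset.sum_neg_distrib]
    refine Finset.sum_congr rfl fun i hi => ?_
    simp only [mem_Icc] at hi
    rw [← neg_smul, show r + s - i - 1 = r + s - 1 - i by omega]
    have hp : (-1 : ℤ) ^ r = -(-1 : ℤ) ^ (r - 1) := by
      conv_lhs => rw [show r = (r - 1) + 1 by omega]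
      rw [pow_succ]; ring
    rw [hp]; ring_nf
  rw [e1, e2, sub_neg_eq_add]


end
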